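/- Let n ≥ 2 and let K_{1,n} be the star graph with center vertex 0 and leaf vertices 1, …, n, viewed as a subgraph of the complete graph on the vertex set {0, 1, …, n}. Then for every d ≥ n+1 there is no d-truncated point module datum over the generalized Fomin–Kirillov algebra E_{K_{1,n}} (the subalgebra of E_{n+1} generated by x_{0,1}, …, x_{0,n}); equivalently, E_{K_{1,n}} admits no truncated point modules of degree greater than n. -/

import Mathlib

noncomputable section

open FreeAlgebra

/-- Index set for the generators `x_{ij}` (`i < j`) of the Fomin–Kirillov algebra `E_n`. -/
abbrev GenIdx (n : ℕ) := {p : Fin n × Fin n // p.1 < p.2}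

/-- The defining relations of the Fomin–Kirillov algebra `E_n`. -/
inductive FKRel (k : Type*) [Field k] (n : ℕ) :
    FreeAlgebra k (GenIdx n) → FreeAlgebra k (GenIdx n) → Prop
  | sq (e : GenIdx n) : FKRel k n (ι k e * ι k e) 0
  | comm (e f : GenIdx n) (h1 : e.1.1 ≠ f.1.1) (h2 : e.1.1 ≠ f.1.2)
      (h3 : e.1.2 ≠ f.1.1) (h4 : e.1.2 ≠ f.1.2) :
      FKRel k n (ι k e * ι k f - ι k f * ι k e) 0
  | tri1 (i j l : Fin n) (hij : i < j) (hjl : j < l) :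
      FKRel k n (ι k ⟨(i, j), hij⟩ * ι k ⟨(j, l), hjl⟩ -
        ι k ⟨(j, l), hjl⟩ * ι k ⟨(i, l), hij.trans hjl⟩ -
        ι k ⟨(i, l), hij.trans hjl⟩ * ι k ⟨(i, j), hij⟩) 0
  | tri2 (i j l : Fin n) (hij : i < j) (hjl : j < l) :
      FKRel k n (ι k ⟨(j, l), hjl⟩ * ι k ⟨(i, j), hij⟩ -
        ι k ⟨(i, l), hij.trans hjl⟩ * ι k ⟨(j, l), hjl⟩ -
        ι k ⟨(i, j), hij⟩ * ι k ⟨(i, l), hij.trans hjl⟩) 0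

/-- The Fomin–Kirillov algebra `E_n` over `k`. -/
abbrev FK (k : Type*) [Field k] (n : ℕ) := RingQuot (FKRel k n)

/-- The generator `x_{ij}` of `E_n`. -/
def fkGen (k : Type*) [Field k] (n : ℕ) (e : GenIdx n) : FK k n :=
  RingQuot.mkAlgHom k (FKRel k n) (ι k e)

/-- The edges of a simple graph `G` on `Fin n`, as generator indices of `E_n`. -/
abbrev EdgeIdx (n : ℕ) (G : SimpleGraph (Fin n)) := {e : GenIdx n // G.Adj e.1.1 e.1.2}

/-- The `(d+1) × (d+1)` matrix whose `(j+1, j)`-entry is `mu j` for `0 ≤ j ≤ d-1`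
and whose other entries vanish. -/
def psiMat (k : Type*) [Field k] (d : ℕ) (mu : ℕ → k) :
    Matrix (Fin (d + 1)) (Fin (d + 1)) k :=
  Matrix.of fun p q => if (p : ℕ) = (q : ℕ) + 1 then mu q else 0

/-- The natural algebra map from the free algebra on the edges of `G` to `E_n`,
sending `X_e` to `x_e`; its image is the generalized Fomin–Kirillov algebra `E_G`. -/
def toFK (k : Type*) [Field k] (n : ℕ) (G : SimpleGraph (Fin n)) :
    FreeAlgebra k (EdgeIdx n G) →ₐ[k] FK k n :=
  FreeAlgebra.lift k fun e => fkGen k n e.1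

/-- The algebra map `ψ_λ` from the free algebra on the edges of `G` to matrices,
sending `X_e` to the matrix with `(j+1, j)`-entry `λ_e^j`. -/
def toMatrices (k : Type*) [Field k] (n d : ℕ) (G : SimpleGraph (Fin n))
    (lam : ℕ → EdgeIdx n G → k) :
    FreeAlgebra k (EdgeIdx n G) →ₐ[k] Matrix (Fin (d + 1)) (Fin (d + 1)) k :=
  FreeAlgebra.lift k fun e => psiMat k d fun j => lam j e

/-- A `d`-truncated point module datum over the generalized Fomin–Kirillov algebra
`E_G ⊆ E_n`: scalars `λ_e^j` (`e` an edge of `G`, `0 ≤ j ≤ d-1`) such that each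
vector `(λ_e^j)_e` is nonzero and `ψ_λ` annihilates the kernel of the natural map
from the free algebra on the edges of `G` to `E_n`. -/
def IsTPMDatum (k : Type*) [Field k] (n d : ℕ) (G : SimpleGraph (Fin n))
    (lam : ℕ → EdgeIdx n G → k) : Prop :=
  (∀ j < d, ∃ e, lam j e ≠ 0) ∧
  ∀ a : FreeAlgebra k (EdgeIdx n G), toFK k n G a = 0 → toMatrices k n d G lam a = 0

/-- The star graph `K_{1,n}` on `{0, 1, …, n}` with center `0`. -/
def starGraph (n : ℕ) : SimpleGraph (Fin (n + 1)) :=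
  SimpleGraph.fromRel fun a _ => a = 0

namespace StarNoTPM

/-! ### An abstract "cyclic relation" lemma -/

variable {R : Type*} [Ring R] {I : Type*}

/-- Product of the images of a list of letters. -/
def prA (a : I → R) (L : List I) : R := (L.map a).prod

/-- One rotation word, with an element `X` inserted after the initial segment. -/
def rotT (a : I → R) (L : List I) (X : R) (kk : ℕ) : R :=
  prA a (L.drop kk) * X * prA a (L.take kk) * prA a ((L.drop kk).take 1)

def rotAux (a : I → R) (L : List I) (X : R) : R :=
  ∑ kk ∈ Finset.range L.length, rotT a L X kk

/-- The cyclic sum `∑ₖ y_k y_{k+1} ⋯ y_{k+m-1} y_k`. -/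
def rotS (a : I → R) (L : List I) : R := rotAux a L 1

lemma prA_append (a : I → R) (A B : List I) :
    prA a (A ++ B) = prA a A * prA a B := by simp [prA]

lemma commute_prA {a : I → R} {c : R} {L : List I}
    (h : ∀ x ∈ L, Commute c (a x)) : Commute c (prA a L) := by
  apply Commute.list_prod_right
  intro y hy
  obtain ⟨x, hx, rfl⟩ := List.mem_map.mp hy
  exact h x hx

private lemma swap_right {c v : R} (h : Commute c v) (w : R) :
    w * c * v = w * v * c := by
  rw [mul_assoc, h.eq, ← mul_assoc]

lemma take_one_append (A B : List I) (h : A ≠ []) :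
    (A ++ B).take 1 = A.take 1 := by
  cases A with
  | nil => exact absurd rfl h
  | cons x t => simp

lemma drop_ne_nil {kk : ℕ} {M : List I} (h : kk < M.length) : M.drop kk ≠ [] := by
  intro hc
  have := congrArg List.length hc
  simp [List.length_drop] at this
  omega

lemma rotAux_concat (a : I → R) (M : List I) (p : I) (X : R) :
    rotAux a (M ++ [p]) X = rotAux a M (a p * X) + a p * X * prA a M * a p := by
  unfold rotAux
  rw [show (M ++ [p]).length = M.length + 1 by simp, Finset.sum_range_succ]
  congr 1
  · apply Finset.sum_congr rfl
    intro kk hkk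
    have hk := Finset.mem_range.mp hkk
    unfold rotT
    rw [List.drop_append_of_le_length hk.le, List.take_append_of_le_length hk.le,
      take_one_append _ _ (drop_ne_nil hk), prA_append]
    simp [prA, mul_assoc]
  · unfold rotT
    rw [List.drop_left, List.take_left]
    simp [prA, mul_assoc]

lemma rotAux_mul_left {a : I → R} {c : R} {M : List I}
    (h : ∀ x ∈ M, Commute c (a x)) (X : R) :
    c * rotAux a M X = rotAux a M (c * X) := by
  unfold rotAux
  rw [Finset.mul_sum]
  apply Finset.sum_congr rfl
  intro kk _
  unfold rotT
  have h1 : Commute c (prA a (M.drop kk)) :=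
    commute_prA (fun x hx => h x (List.mem_of_mem_drop hx))
  simp only [← mul_assoc]
  rw [h1.eq]

lemma rotAux_mul_right {a : I → R} {c : R} {M : List I}
    (h : ∀ x ∈ M, Commute c (a x)) (X : R) :
    rotAux a M (X * c) = rotAux a M X * c := by
  unfold rotAux
  rw [Finset.sum_mul]
  apply Finset.sum_congr rfl
  intro kk _
  unfold rotT
  have hT : Commute c (prA a (M.take kk)) :=
    commute_prA (fun x hx => h x (List.mem_of_mem_take hx))
  have hH : Commute c (prA a ((M.drop kk).take 1)) :=
    commute_prA (fun x hx => h x (List.mem_of_mem_drop (List.mem_of_mem_take hx)))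
  simp only [← mul_assoc]
  rw [swap_right hT, swap_right hH]

lemma rotAux_add (a : I → R) (M : List I) (X Y : R) :
    rotAux a M (X + Y) = rotAux a M X + rotAux a M Y := by
  simp [rotAux, rotT, mul_add, add_mul, Finset.sum_add_distrib]

lemma rotAux_neg (a : I → R) (M : List I) (X : R) :
    rotAux a M (-X) = -rotAux a M X := by
  simp [rotAux, rotT, mul_neg, neg_mul]

/-- The key algebraic fact: cyclic sums over lists of distinct letters vanish,
given square-zero letters and the pair relations. -/
theorem rotS_eq_zero (a : I → R) (hsq : ∀ i, a i * a i = 0)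
    (hpair : ∀ p q : I, p ≠ q → ∃ c : R,
      (∀ l, l ≠ p → l ≠ q → Commute c (a l)) ∧
      (c * a p = a q * c + a p * a q ∨ c * a p = a q * c - a p * a q)) :
    ∀ (N : ℕ) (L : List I), L.length = N → L.Nodup → rotS a L = 0 := by
  intro N
  induction N using Nat.strong_induction_on with
  | _ N IH =>
    intro L hlen hnd
    rcases List.eq_nil_or_concat L with rfl | ⟨L', q, rfl⟩
    · simp [rotS, rotAux]
    rw [List.concat_eq_append] at *
    rcases List.eq_nil_or_concat L' with rfl | ⟨M, p, rfl⟩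
    · simp [rotS, rotAux, rotT, prA, Finset.sum_range_succ, hsq q]
    rw [List.concat_eq_append] at *
    rw [List.nodup_append] at hnd
    obtain ⟨hndu, -, hdisj⟩ := hnd
    have hqMp : q ∉ M ++ [p] := fun h => hdisj q h q (by simp) rfl
    have hqM : q ∉ M := fun h => hqMp (by simp [h])
    have hpq : p ≠ q := fun h => hqMp (by simp [h])
    rw [List.nodup_append] at hndu
    obtain ⟨hndM, -, hdisj2⟩ := hndu
    have hpM : p ∉ M := fun h => hdisj2 p h p (by simp) rfl
    have hndv : (M ++ [q]).Nodup := by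
      rw [List.nodup_append]
      exact ⟨hndM, List.nodup_singleton q, fun x hx y hy hxy => hqM (by
        simp at hy; subst hy; subst hxy; exact hx)⟩
    have hlen2 : M.length + 2 = N := by simpa using hlen
    have IHu : rotS a (M ++ [p]) = 0 := by
      refine IH (M.length + 1) (by omega) _ (by simp) ?_
      rw [List.nodup_append]
      exact ⟨hndM, List.nodup_singleton p, fun x hx y hy hxy => hpM (by
        simp at hy; subst hy; subst hxy; exact hx)⟩
    have IHv : rotS a (M ++ [q]) = 0 := IH (M.length + 1) (by omega) _ (by simp) hndv
    obtain ⟨c, hcomm, hrel⟩ := hpair p q hpq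
    have hcM : ∀ x ∈ M, Commute c (a x) := fun x hx =>
      hcomm x (fun h => hpM (h ▸ hx)) (fun h => hqM (h ▸ hx))
    have hcPr : Commute c (prA a M) := commute_prA hcM
    have expand_u : rotS a (M ++ [p]) = rotAux a M (a p) + a p * prA a M * a p := by
      rw [rotS, rotAux_concat]; simp [mul_one]
    have expand_v : rotS a (M ++ [q]) = rotAux a M (a q) + a q * prA a M * a q := by
      rw [rotS, rotAux_concat]; simp [mul_one]
    have expand_w : rotS a (M ++ [p] ++ [q]) =
        rotAux a M (a p * a q) + (a p * a q * (prA a M * a p) +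
          a q * prA a M * (a p * a q)) := by
      rw [rotS, rotAux_concat, rotAux_concat, prA_append]
      simp only [mul_one, prA]
      simp only [List.map_cons, List.map_nil, List.prod_cons, List.prod_nil, mul_one]
      simp only [mul_assoc]
      abel
    set E : R := c * a p - a q * c with hEdef
    have hEr : c * a p = a q * c + E := by rw [hEdef]; abel
    have step : c * rotS a (M ++ [p]) =
        rotS a (M ++ [q]) * c +
          (rotAux a M E + (E * (prA a M * a p) + a q * prA a M * E)) := by
      rw [expand_u, expand_v, mul_add, rotAux_mul_left hcM, hEr, rotAux_add,
        rotAux_mul_right hcM]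
      have hb : c * (a p * prA a M * a p) =
          a q * prA a M * a q * c + (E * (prA a M * a p) + a q * prA a M * E) := by
        have h1 : c * (a p * prA a M * a p) = (c * a p) * (prA a M * a p) := by
          simp only [mul_assoc]
        rw [h1, hEr, add_mul]
        have h2 : (a q * c) * (prA a M * a p) = a q * prA a M * (c * a p) := by
          rw [mul_assoc (a q) c (prA a M * a p), ← mul_assoc c (prA a M) (a p),
            hcPr.eq, mul_assoc (prA a M) c (a p), ← mul_assoc (a q) (prA a M) _,
            mul_assoc]
        rw [h2, hEr, mul_add]
        simp only [mul_assoc]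
        abel
      rw [hb, add_mul]
      simp only [mul_assoc]
      abel
    rw [IHu, IHv, mul_zero, zero_mul, zero_add] at step
    have hfin : rotAux a M E + (E * (prA a M * a p) + a q * prA a M * E) = 0 := step.symm
    rcases hrel with h | h
    · have hEeq : E = a p * a q := by rw [hEdef, h]; abel
      rw [expand_w, ← hEeq]
      exact hfin
    · have hEeq : E = -(a p * a q) := by rw [hEdef, h]; abel
      rw [hEeq] at hfin
      rw [rotAux_neg] at hfin
      have hneg : -(rotAux a M (a p * a q) + (a p * a q * (prA a M * a p) +
          a q * prA a M * (a p * a q))) = 0 := by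
        rw [← hfin]
        simp only [neg_mul, mul_neg]
        abel
      rw [expand_w]
      exact neg_eq_zero.mp hneg

/-! ### Coefficients of the matrix representation -/

section Coeff

variable {k : Type*} [Field k] {d : ℕ} {Ed : Type*} (lam : ℕ → Ed → k)

/-- `coeffW lam j W = ∏ᵢ lam (j + |W| - 1 - i) (W i)`. -/
def coeffW (j : ℕ) : List Ed → k
  | [] => 1
  | e :: W => lam (j + W.length) e * coeffW j W

lemma coeffW_append (j : ℕ) (A B : List Ed) :
    coeffW lam j (A ++ B) = coeffW lam (j + B.length) A * coeffW lam j B := by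
  induction A with
  | nil => simp [coeffW]
  | cons e A ih =>
    simp only [List.cons_append, coeffW, ih, List.append_eq, List.length_append]
    rw [show j + (A.length + B.length) = j + B.length + A.length by omega]
    ring

lemma coeffW_ne_zero (j : ℕ) (W : List Ed)
    (h : ∀ i (hi : i < W.length), lam (j + (W.length - 1 - i)) (W.get ⟨i, hi⟩) ≠ 0) :
    coeffW lam j W ≠ 0 := by
  induction W with
  | nil => simp [coeffW]
  | cons e W ih =>
    rw [coeffW]
    apply mul_ne_zero
    · have := h 0 (by simp)
      simpa using this
    · apply ih
      intro i hi
      have := h (i + 1) (by simp; omega)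
      have harith : (e :: W).length - 1 - (i + 1) = W.length - 1 - i := by
        simp; omega
      rw [harith] at this
      simpa using this

/-- Entry extraction for products of `psiMat`-type matrices. -/
lemma prA_psi_apply (psi : Ed → Matrix (Fin (d + 1)) (Fin (d + 1)) k)
    (hpsi : ∀ e p q, psi e p q = if (p : ℕ) = (q : ℕ) + 1 then lam q e else 0)
    (W : List Ed) (j : ℕ) (r s : Fin (d + 1))
    (hr : (r : ℕ) = j + W.length) (hs : (s : ℕ) = j) :
    prA psi W r s = coeffW lam j W := by
  induction W generalizing r with
  | nil =>
    simp only [List.length_nil, Nat.add_zero] at hr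
    have : r = s := Fin.ext (by omega)
    rw [this, prA]
    simp [coeffW, Matrix.one_apply_eq]
  | cons e W ih =>
    simp only [List.length_cons] at hr
    have hlt : j + W.length < d + 1 := by
      have := r.isLt; omega
    set t0 : Fin (d + 1) := ⟨j + W.length, hlt⟩ with ht0
    have hprA : prA psi (e :: W) = psi e * prA psi W := by simp [prA]
    rw [hprA, Matrix.mul_apply]
    rw [Fintype.sum_eq_single t0]
    · rw [hpsi]
      have : (r : ℕ) = (t0 : ℕ) + 1 := by simp [ht0, hr]; omega
      rw [if_pos this, ih t0 (by simp [ht0])]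
      simp [coeffW, ht0]
    · intro t ht
      rw [hpsi, if_neg, zero_mul]
      intro hc
      apply ht
      apply Fin.ext
      simp [ht0]
      omega

end Coeff

lemma rotT_eq_prA (a : I → R) (L : List I) (kk : ℕ) :
    rotT a L 1 kk = prA a (L.drop kk ++ (L.take kk ++ (L.drop kk).take 1)) := by
  simp [rotT, prA_append, mul_one, mul_assoc]

section MapRot

variable {S : Type*} [Ring S]

lemma map_prA {F : Type*} [FunLike F R S] [RingHomClass F R S] (φ : F)
    (a : I → R) (L : List I) : φ (prA a L) = prA (fun i => φ (a i)) L := by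
  rw [prA, map_list_prod, List.map_map, prA]
  rfl

lemma map_rotS {F : Type*} [FunLike F R S] [RingHomClass F R S] (φ : F)
    (a : I → R) (L : List I) : φ (rotS a L) = rotS (fun i => φ (a i)) L := by
  rw [rotS, rotS, rotAux, rotAux, map_sum]
  apply Finset.sum_congr rfl
  intro kk _
  rw [rotT, rotT, map_mul, map_mul, map_mul, map_one, map_prA, map_prA, map_prA]

end MapRot

/-! ### Relations in the Fomin–Kirillov algebra -/

section FKLemmas

variable (k : Type*) [Field k] {n : ℕ}

lemma fk_sq (e : GenIdx n) : fkGen k n e * fkGen k n e = 0 := by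
  rw [fkGen, ← map_mul]
  rw [RingQuot.mkAlgHom_rel k (FKRel.sq (k := k) e), map_zero]

lemma fk_comm (e f : GenIdx n) (h1 : e.1.1 ≠ f.1.1) (h2 : e.1.1 ≠ f.1.2)
    (h3 : e.1.2 ≠ f.1.1) (h4 : e.1.2 ≠ f.1.2) :
    fkGen k n e * fkGen k n f = fkGen k n f * fkGen k n e := by
  have h := RingQuot.mkAlgHom_rel k (FKRel.comm (k := k) e f h1 h2 h3 h4)
  rw [map_sub, map_mul, map_mul, map_zero, sub_eq_zero] at h
  exact h

lemma fk_tri1 (i j l : Fin n) (hij : i < j) (hjl : j < l) :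
    fkGen k n ⟨(i, j), hij⟩ * fkGen k n ⟨(j, l), hjl⟩ =
      fkGen k n ⟨(j, l), hjl⟩ * fkGen k n ⟨(i, l), hij.trans hjl⟩ +
      fkGen k n ⟨(i, l), hij.trans hjl⟩ * fkGen k n ⟨(i, j), hij⟩ := by
  have h := RingQuot.mkAlgHom_rel k (FKRel.tri1 (k := k) i j l hij hjl)
  rw [map_sub, map_sub, map_mul, map_mul, map_mul, map_zero, sub_sub, sub_eq_zero] at h
  exact h

lemma fk_tri2 (i j l : Fin n) (hij : i < j) (hjl : j < l) :
    fkGen k n ⟨(j, l), hjl⟩ * fkGen k n ⟨(i, j), hij⟩ =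
      fkGen k n ⟨(i, l), hij.trans hjl⟩ * fkGen k n ⟨(j, l), hjl⟩ +
      fkGen k n ⟨(i, j), hij⟩ * fkGen k n ⟨(i, l), hij.trans hjl⟩ := by
  have h := RingQuot.mkAlgHom_rel k (FKRel.tri2 (k := k) i j l hij hjl)
  rw [map_sub, map_sub, map_mul, map_mul, map_mul, map_zero, sub_sub, sub_eq_zero] at h
  exact h

end FKLemmas

end StarNoTPM

open StarNoTPM in
/-- For `n ≥ 2`, the generalized Fomin–Kirillov algebra `E_{K_{1,n}} ⊆ E_{n+1}` of the
star graph admits no `d`-truncated point module for any `d ≥ n + 1`. -/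
theorem star_no_truncated_point_modules (k : Type*) [Field k] [IsAlgClosed k]
    (n d : ℕ) (hn : 2 ≤ n) (hd : n + 1 ≤ d) :
    ¬ ∃ lam : ℕ → EdgeIdx (n + 1) (starGraph n) → k,
      IsTPMDatum k (n + 1) d (starGraph n) lam := by
  rintro ⟨lam, hnz, hker⟩
  -- structure of star edges
  have hfst : ∀ e : EdgeIdx (n + 1) (starGraph n), e.1.1.1 = 0 := by
    intro e
    have h := e.2
    unfold starGraph at h
    rw [SimpleGraph.fromRel_adj] at h
    rcases h.2 with h0 | h0
    · exact h0
    · exact absurd (h0 ▸ e.1.2) (by simp)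
  have hsnd : ∀ e : EdgeIdx (n + 1) (starGraph n), (0 : Fin (n + 1)) < e.1.1.2 := by
    intro e
    have h := e.1.2
    rw [hfst e] at h
    exact h
  have hrepr : ∀ e : EdgeIdx (n + 1) (starGraph n),
      e.1 = ⟨(0, e.1.1.2), hsnd e⟩ := by
    intro e
    apply Subtype.ext
    exact Prod.ext (hfst e) rfl
  have hedge_eq : ∀ x y : EdgeIdx (n + 1) (starGraph n),
      x.1.1.2 = y.1.1.2 → x = y := by
    intro x y h
    apply Subtype.ext
    rw [hrepr x, hrepr y]
    exact Subtype.ext (Prod.ext rfl h)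
  -- the generators of `E_{K_{1,n}}` in `FK k (n+1)`
  set fka : EdgeIdx (n + 1) (starGraph n) → FK k (n + 1) :=
    fun e => fkGen k (n + 1) e.1 with hfka
  have hsqFK : ∀ e, fka e * fka e = 0 := fun e => fk_sq k e.1
  have hpairFK : ∀ p q : EdgeIdx (n + 1) (starGraph n), p ≠ q →
      ∃ c : FK k (n + 1),
        (∀ l, l ≠ p → l ≠ q → Commute c (fka l)) ∧
        (c * fka p = fka q * c + fka p * fka q ∨
         c * fka p = fka q * c - fka p * fka q) := by
    intro p q hpq
    have hPQ : p.1.1.2 ≠ q.1.1.2 := fun h => hpq (hedge_eq p q h)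
    have hP : (0 : Fin (n + 1)) < p.1.1.2 := hsnd p
    have hQ : (0 : Fin (n + 1)) < q.1.1.2 := hsnd q
    have hfkap : fka p = fkGen k (n + 1) ⟨(0, p.1.1.2), hP⟩ := by
      rw [hfka]; exact congrArg (fkGen k (n + 1)) (hrepr p)
    have hfkaq : fka q = fkGen k (n + 1) ⟨(0, q.1.1.2), hQ⟩ := by
      rw [hfka]; exact congrArg (fkGen k (n + 1)) (hrepr q)
    have hcom : ∀ (u v : Fin (n + 1)) (huv : u < v), 0 < u →
        ∀ l : EdgeIdx (n + 1) (starGraph n), l.1.1.2 ≠ u → l.1.1.2 ≠ v →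
        Commute (fkGen k (n + 1) ⟨(u, v), huv⟩) (fka l) := by
      intro u v huv hu l hlu hlv
      have hL : (0 : Fin (n + 1)) < l.1.1.2 := hsnd l
      have h := fk_comm k ⟨(0, l.1.1.2), hL⟩ ⟨(u, v), huv⟩
        (by simpa using hu.ne) (by simpa using (hu.trans huv).ne)
        (by simpa using hlu) (by simpa using hlv)
      have hfkal : fka l = fkGen k (n + 1) ⟨(0, l.1.1.2), hL⟩ := by
        rw [hfka]; exact congrArg (fkGen k (n + 1)) (hrepr l)
      rw [hfkal]
      exact (show Commute (fkGen k (n + 1) ⟨(0, l.1.1.2), hL⟩)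
        (fkGen k (n + 1) ⟨(u, v), huv⟩) from h).symm
    rcases hPQ.lt_or_gt with hlt | hlt
    · refine ⟨fkGen k (n + 1) ⟨(p.1.1.2, q.1.1.2), hlt⟩, ?_, Or.inl ?_⟩
      · intro l hlp hlq
        exact hcom p.1.1.2 q.1.1.2 hlt hP l
          (fun h => hlp (hedge_eq l p h)) (fun h => hlq (hedge_eq l q h))
      · rw [hfkap, hfkaq]
        exact fk_tri2 k 0 p.1.1.2 q.1.1.2 hP hlt
    · refine ⟨fkGen k (n + 1) ⟨(q.1.1.2, p.1.1.2), hlt⟩, ?_, Or.inr ?_⟩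
      · intro l hlp hlq
        exact hcom q.1.1.2 p.1.1.2 hlt hQ l
          (fun h => hlq (hedge_eq l q h)) (fun h => hlp (hedge_eq l p h))
      · rw [hfkap, hfkaq]
        have h := fk_tri1 k 0 q.1.1.2 p.1.1.2 hQ hlt
        rw [h, add_sub_cancel_right]
  have hFK : ∀ L : List (EdgeIdx (n + 1) (starGraph n)), L.Nodup → rotS fka L = 0 :=
    fun L h => rotS_eq_zero fka hsqFK hpairFK L.length L rfl h
  set psa : EdgeIdx (n + 1) (starGraph n) → Matrix (Fin (d + 1)) (Fin (d + 1)) k :=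
    fun e => psiMat k d fun t => lam t e with hpsa
  have hMat : ∀ L : List (EdgeIdx (n + 1) (starGraph n)), L.Nodup →
      rotS psa L = 0 := by
    intro L hL
    have h1 : toFK k (n + 1) (starGraph n) (rotS (FreeAlgebra.ι k) L) = 0 := by
      rw [map_rotS]
      have he : (fun i => toFK k (n + 1) (starGraph n) (FreeAlgebra.ι k i)) = fka := by
        funext e
        simp only [toFK, FreeAlgebra.lift_ι_apply, hfka]
      rw [he]
      exact hFK L hL
    have h2 := hker _ h1
    rw [map_rotS] at h2
    have he : (fun i => toMatrices k (n + 1) d (starGraph n) lam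
        (FreeAlgebra.ι k i)) = psa := by
      funext e
      simp only [toMatrices, FreeAlgebra.lift_ι_apply, hpsa]
    rw [he] at h2
    exact h2
  -- the key disjointness claim
  have key : ∀ mm : ℕ, ∀ j : ℕ, ∀ e0 : EdgeIdx (n + 1) (starGraph n),
      j + mm + 2 ≤ d → lam j e0 ≠ 0 → lam (j + mm + 1) e0 = 0 := by
    intro mm
    induction mm using Nat.strong_induction_on with
    | _ mm IH =>
      intro j e0 hle hj0
      by_contra hne
      have hpicks : ∀ t : Fin mm, ∃ e, lam (j + mm - t.1) e ≠ 0 := by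
        intro t
        exact hnz _ (by omega)
      choose pick hpick using hpicks
      set T : List (EdgeIdx (n + 1) (starGraph n)) := List.ofFn pick with hT
      have hTlen : T.length = mm := by simp [hT]
      set L : List (EdgeIdx (n + 1) (starGraph n)) := e0 :: T with hL
      have hLlen : L.length = mm + 1 := by simp [hL, hTlen]
      have hmidzero : ∀ g : ℕ, 0 < g → g ≤ mm → lam (j + g) e0 = 0 := by
        intro g hg1 hg2
        have h0 := IH (g - 1) (by omega) j e0 (by omega) hj0
        rwa [show j + (g - 1) + 1 = j + g by omega] at h0
      have hnodup : L.Nodup := by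
        rw [hL, List.nodup_cons]
        constructor
        · intro hmem
          rw [hT, List.mem_ofFn] at hmem
          obtain ⟨t, ht⟩ := hmem
          have hval := hpick t
          rw [ht] at hval
          have htlt : t.1 < mm := t.isLt
          apply hval
          have := hmidzero (mm - t.1) (by omega) (by omega)
          rwa [show j + (mm - t.1) = j + mm - t.1 by omega] at this
        · rw [hT, List.nodup_ofFn]
          intro t1 t2 h12
          by_contra hne12
          have hv : t1.1 ≠ t2.1 := fun h => hne12 (Fin.ext h)
          have hgen : ∀ s1 s2 : Fin mm, s1.1 < s2.1 → pick s1 = pick s2 → False := by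
            intro s1 s2 hlt12 heq
            have h1 := hpick s1
            have h2 := hpick s2
            rw [heq] at h1
            have hs2 := s2.isLt
            have h0 := IH (s2.1 - s1.1 - 1) (by omega) (j + mm - s2.1) (pick s2)
              (by omega) h2
            rw [show j + mm - s2.1 + (s2.1 - s1.1 - 1) + 1 = j + mm - s1.1 by omega] at h0
            exact h1 h0
          rcases lt_trichotomy t1.1 t2.1 with h | h | h
          · exact hgen t1 t2 h h12
          · exact hne12 (Fin.ext h)
          · exact hgen t2 t1 h h12.symm
      have hz : rotS psa L = 0 := hMat L hnodup
      have hr1 : j + mm + 2 < d + 1 := by omega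
      have hs1 : j < d + 1 := by omega
      have hsum : ∑ kk ∈ Finset.range (mm + 1),
          coeffW lam j (L.drop kk ++ (L.take kk ++ (L.drop kk).take 1)) = 0 := by
        have h0 : rotS psa L (⟨j + mm + 2, hr1⟩ : Fin (d + 1)) ⟨j, hs1⟩ = 0 := by
          rw [hz]
          rfl
        rw [rotS, rotAux, hLlen, Matrix.sum_apply] at h0
        rw [← h0]
        apply Finset.sum_congr rfl
        intro kk hkk
        have hkk' := Finset.mem_range.mp hkk
        rw [rotT_eq_prA]
        refine (prA_psi_apply lam psa (fun e pp qq => rfl) _ j _ _ ?_ rfl).symm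
        simp only [List.length_append, List.length_drop, List.length_take, hLlen]
        omega
      rw [Finset.sum_range_succ'] at hsum
      have hmid : ∀ κ, κ < mm → coeffW lam j
          (L.drop (κ + 1) ++ (L.take (κ + 1) ++ (L.drop (κ + 1)).take 1)) = 0 := by
        intro κ hκ
        rw [coeffW_append, coeffW_append]
        have hCl : ((L.drop (κ + 1)).take 1).length = 1 := by
          simp only [List.length_take, List.length_drop, hLlen]
          omega
        rw [hCl]
        have htake : L.take (κ + 1) = e0 :: T.take κ := by
          rw [hL, List.take_succ_cons]
        rw [htake]
        simp only [coeffW]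
        have hκlen : (T.take κ).length = κ := by
          simp only [List.length_take, hTlen]
          omega
        rw [hκlen]
        have hz0 : lam (j + 1 + κ) e0 = 0 := by
          have := hmidzero (κ + 1) (by omega) (by omega)
          rwa [show j + (κ + 1) = j + 1 + κ by omega] at this
        rw [hz0]
        ring
      have hlast : coeffW lam j (L.drop 0 ++ (L.take 0 ++ (L.drop 0).take 1)) ≠ 0 := by
        have htake1 : L.take 1 = [e0] := by rw [hL]; rfl
        rw [List.drop_zero, List.take_zero, htake1, List.nil_append, coeffW_append]
        have h1 : coeffW lam j [e0] = lam j e0 := by simp [coeffW]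
        have h2 : coeffW lam (j + 1) L = lam (j + 1 + mm) e0 * coeffW lam (j + 1) T := by
          rw [hL]
          simp only [coeffW, hTlen]
        rw [show ([e0] : List (EdgeIdx (n + 1) (starGraph n))).length = 1 from rfl,
          h1, h2]
        apply mul_ne_zero (mul_ne_zero ?_ ?_) hj0
        · rwa [show j + 1 + mm = j + mm + 1 by omega]
        · apply coeffW_ne_zero
          intro i hi
          have hi' : i < mm := by rw [hTlen] at hi; exact hi
          have hget : T.get ⟨i, hi⟩ = pick ⟨i, hi'⟩ := List.get_ofFn pick ⟨i, hi⟩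
          rw [hget, show j + 1 + (T.length - 1 - i) = j + mm - i by rw [hTlen]; omega]
          exact hpick ⟨i, hi'⟩
      have hz2 : ∑ κ ∈ Finset.range mm, coeffW lam j
          (L.drop (κ + 1) ++ (L.take (κ + 1) ++ (L.drop (κ + 1)).take 1)) = 0 :=
        Finset.sum_eq_zero (fun κ hκ => hmid κ (Finset.mem_range.mp hκ))
      rw [hz2, zero_add] at hsum
      exact hlast hsum
  -- pigeonhole
  have hnlt : ∀ s : Fin (n + 1), (s : ℕ) < d := fun s => by
    have := s.isLt; omega
  choose F hF using fun s : Fin (n + 1) => hnz s (hnlt s)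
  have hFinj : Function.Injective F := by
    intro s1 s2 h12
    by_contra hne'
    have hv : (s1 : ℕ) ≠ (s2 : ℕ) := fun h => hne' (Fin.ext h)
    have hgen : ∀ a b : Fin (n + 1), (a : ℕ) < (b : ℕ) → F a = F b → False := by
      intro a b hab heq
      have h1 := hF a
      have h2 := hF b
      rw [heq] at h1
      have hble := b.isLt
      have h0 := key (b.1 - a.1 - 1) a.1 (F b) (by omega) h1
      rw [show a.1 + (b.1 - a.1 - 1) + 1 = b.1 by omega] at h0
      exact h2 h0
    rcases lt_or_gt_of_ne hv with h | h
    · exact hgen s1 s2 h h12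
    · exact hgen s2 s1 h h12.symm
  have hgm : Function.Injective (fun s : Fin (n + 1) => (F s).1.1.2) := by
    intro s1 s2 h
    exact hFinj (hedge_eq _ _ h)
  obtain ⟨s, hs⟩ := Finite.injective_iff_surjective.mp hgm (0 : Fin (n + 1))
  exact absurd hs (hsnd (F s)).ne'
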